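/- Let J, V : ℝ → M₄(ℂ) be differentiable maps solving the linear system (⋆), i.e. J′(s) = B(s)ᵀ J(s) + C(s) V(s) and V′(s) = −A(s) J(s) − B(s) V(s), with J(0) = Id and V(0) = M₀ where M₀ᵀ = M₀. Let (j, v) : ℝ → ℝ⁴ × ℝ⁴ be a differentiable real-valued solution of (⋆) such that j(s) ≠ 0 for every s ∈ ℝ and v(0) = M₀ · j(0) (in particular M₀ j(0) is real). Assume there exists a 3-dimensional real subspace W ⊆ ℝ⁴ with W ⊕ ℝ·j(0) = ℝ⁴ such that xᵀ (Im M₀) x > 0 for every nonzero x ∈ W. Then J(s) is invertible for every s ∈ ℝ. -/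

import Mathlib

open Matrix

/-- Entrywise coercion of a real matrix to a complex matrix. -/
noncomputable def matC (A : Matrix (Fin 4) (Fin 4) ℝ) : Matrix (Fin 4) (Fin 4) ℂ :=
  A.map Complex.ofReal

lemma matC_transpose (X : Matrix (Fin 4) (Fin 4) ℝ) : (matC X)ᵀ = matC Xᵀ := by
  ext i k; simp [matC]

lemma aux_const_of_deriv_zero (f : ℝ → ℂ) (hf : ∀ s : ℝ, HasDerivAt f 0 s) (s : ℝ) :
    f s = f 0 :=
  is_const_of_deriv_eq_zero (fun t => (hf t).differentiableAt) (fun t => (hf t).deriv) s 0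

lemma dot_symm (M : Matrix (Fin 4) (Fin 4) ℂ) (hM : Mᵀ = M) (a b : Fin 4 → ℂ) :
    (M *ᵥ a) ⬝ᵥ b = a ⬝ᵥ (M *ᵥ b) := by
  nth_rewrite 1 [← hM]
  rw [mulVec_transpose, ← dotProduct_mulVec]

lemma key_identity (A B C : Matrix (Fin 4) (Fin 4) ℂ) (hA : Aᵀ = A) (hC : Cᵀ = C)
    (p q r t : Fin 4 → ℂ) :
    ((Bᵀ *ᵥ p + C *ᵥ q) ⬝ᵥ t + p ⬝ᵥ (-A *ᵥ r - B *ᵥ t))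
      - ((-A *ᵥ p - B *ᵥ q) ⬝ᵥ r + q ⬝ᵥ (Bᵀ *ᵥ r + C *ᵥ t)) = 0 := by
  have e1 : (Bᵀ *ᵥ p) ⬝ᵥ t = p ⬝ᵥ (B *ᵥ t) := by
    rw [mulVec_transpose, ← dotProduct_mulVec]
  have e2 : (C *ᵥ q) ⬝ᵥ t = q ⬝ᵥ (C *ᵥ t) := dot_symm C hC q t
  have e3 : (A *ᵥ p) ⬝ᵥ r = p ⬝ᵥ (A *ᵥ r) := dot_symm A hA p r
  have e4 : q ⬝ᵥ (Bᵀ *ᵥ r) = (B *ᵥ q) ⬝ᵥ r := by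
    rw [dotProduct_mulVec, vecMul_transpose]
  simp only [add_dotProduct, neg_mulVec, neg_dotProduct, sub_dotProduct,
    dotProduct_add, dotProduct_sub, dotProduct_neg, e1, e2, e3, e4]
  ring


lemma wronskian_const (A B C : ℝ → Matrix (Fin 4) (Fin 4) ℝ)
    (hAsymm : ∀ s : ℝ, (A s)ᵀ = A s) (hCsymm : ∀ s : ℝ, (C s)ᵀ = C s)
    (p q r t : ℝ → Fin 4 → ℂ)
    (hp : ∀ (s : ℝ) (i : Fin 4), HasDerivAt (fun u => p u i)
      (((matC (B s))ᵀ *ᵥ p s + matC (C s) *ᵥ q s) i) s)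
    (hq : ∀ (s : ℝ) (i : Fin 4), HasDerivAt (fun u => q u i)
      ((-(matC (A s)) *ᵥ p s - matC (B s) *ᵥ q s) i) s)
    (hr : ∀ (s : ℝ) (i : Fin 4), HasDerivAt (fun u => r u i)
      (((matC (B s))ᵀ *ᵥ r s + matC (C s) *ᵥ t s) i) s)
    (ht : ∀ (s : ℝ) (i : Fin 4), HasDerivAt (fun u => t u i)
      ((-(matC (A s)) *ᵥ r s - matC (B s) *ᵥ t s) i) s)
    (s : ℝ) :
    p s ⬝ᵥ t s - q s ⬝ᵥ r s = p 0 ⬝ᵥ t 0 - q 0 ⬝ᵥ r 0 := by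
  apply aux_const_of_deriv_zero (fun u => p u ⬝ᵥ t u - q u ⬝ᵥ r u) ?_ s
  intro u
  have h1 : HasDerivAt (fun u => p u ⬝ᵥ t u)
      ((((matC (B u))ᵀ *ᵥ p u + matC (C u) *ᵥ q u) ⬝ᵥ t u)
        + (p u ⬝ᵥ (-(matC (A u)) *ᵥ r u - matC (B u) *ᵥ t u))) u := by
    have := HasDerivAt.sum (u := Finset.univ) (A' := fun i =>
        ((matC (B u))ᵀ *ᵥ p u + matC (C u) *ᵥ q u) i * t u i
          + p u i * (-(matC (A u)) *ᵥ r u - matC (B u) *ᵥ t u) i)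
      (fun i _ => ((hp u i).mul (ht u i)))
    simpa [dotProduct, Finset.sum_add_distrib, Finset.mul_sum, Finset.sum_fn, Pi.mul_def] using this
  have h2 : HasDerivAt (fun u => q u ⬝ᵥ r u)
      (((-(matC (A u)) *ᵥ p u - matC (B u) *ᵥ q u) ⬝ᵥ r u)
        + (q u ⬝ᵥ ((matC (B u))ᵀ *ᵥ r u + matC (C u) *ᵥ t u))) u := by
    have := HasDerivAt.sum (u := Finset.univ) (A' := fun i =>
        (-(matC (A u)) *ᵥ p u - matC (B u) *ᵥ q u) i * r u i
          + q u i * ((matC (B u))ᵀ *ᵥ r u + matC (C u) *ᵥ t u) i)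
      (fun i _ => ((hq u i).mul (hr u i)))
    simpa [dotProduct, Finset.sum_add_distrib, Finset.mul_sum, Finset.sum_fn, Pi.mul_def] using this
  have hkey := key_identity (matC (A u)) (matC (B u)) (matC (C u))
    (by rw [matC_transpose, hAsymm]) (by rw [matC_transpose, hCsymm])
    (p u) (q u) (r u) (t u)
  exact hkey ▸ h1.sub h2


lemma mulVec_entry_norm_le (M : Matrix (Fin 4) (Fin 4) ℂ) (x : Fin 4 → ℂ) (R : ℝ)
    (hR : ∀ i k, ‖M i k‖ ≤ R) (i : Fin 4) : ‖(M *ᵥ x) i‖ ≤ 4 * R * ‖x‖ := by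
  calc ‖∑ k, M i k * x k‖ ≤ ∑ k, ‖M i k * x k‖ := norm_sum_le _ _
    _ ≤ ∑ _k : Fin 4, R * ‖x‖ := by
        refine Finset.sum_le_sum fun k _ => ?_
        rw [norm_mul]
        exact mul_le_mul (hR i k) (norm_le_pi_norm x k) (norm_nonneg _)
          (le_trans (norm_nonneg _) (hR i k))
    _ = 4 * R * ‖x‖ := by simp [Finset.sum_const]; ring


open Set in
lemma ode_unique (A B C : ℝ → Matrix (Fin 4) (Fin 4) ℝ)
    (hAcont : ∀ i j : Fin 4, Continuous fun s => A s i j)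
    (hBcont : ∀ i j : Fin 4, Continuous fun s => B s i j)
    (hCcont : ∀ i j : Fin 4, Continuous fun s => C s i j)
    (p q r t : ℝ → Fin 4 → ℂ)
    (hp : ∀ (s : ℝ) (i : Fin 4), HasDerivAt (fun u => p u i)
      (((matC (B s))ᵀ *ᵥ p s + matC (C s) *ᵥ q s) i) s)
    (hq : ∀ (s : ℝ) (i : Fin 4), HasDerivAt (fun u => q u i)
      ((-(matC (A s)) *ᵥ p s - matC (B s) *ᵥ q s) i) s)
    (hr : ∀ (s : ℝ) (i : Fin 4), HasDerivAt (fun u => r u i)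
      (((matC (B s))ᵀ *ᵥ r s + matC (C s) *ᵥ t s) i) s)
    (ht : ∀ (s : ℝ) (i : Fin 4), HasDerivAt (fun u => t u i)
      ((-(matC (A s)) *ᵥ r s - matC (B s) *ᵥ t s) i) s)
    (h0 : p 0 = r 0) (h0' : q 0 = t 0) (s : ℝ) : p s = r s := by
  set a : ℝ := min 0 s - 1 with ha
  set b : ℝ := max 0 s + 1 with hb
  have hab : a ≤ b := by
    have := min_le_max (a := (0:ℝ)) (b := s); rw [ha, hb]; linarith
  have h0mem : (0:ℝ) ∈ Ioo a b := by
    constructor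
    · rw [ha]; have := min_le_left (0:ℝ) s; linarith
    · rw [hb]; have := le_max_left (0:ℝ) s; linarith
  have hsmem : s ∈ Icc a b := by
    constructor
    · rw [ha]; have := min_le_right (0:ℝ) s; linarith
    · rw [hb]; have := le_max_right (0:ℝ) s; linarith
  set c : ℝ → ℝ := fun u => max a (min u b) with hc
  have hcIcc : ∀ u, c u ∈ Icc a b := fun u =>
    ⟨le_max_left _ _, max_le hab (min_le_right _ _)⟩
  have hceq : ∀ u ∈ Ioo a b, c u = u := by
    intro u hu
    simp only [hc]
    rw [min_eq_left hu.2.le, max_eq_right hu.1.le]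
  -- entry bounds
  set g : ℝ → ℝ := fun u => ∑ i : Fin 4, ∑ k : Fin 4,
    (|A u i k| + |B u i k| + |C u i k|) with hg
  have hgcont : Continuous g := by
    apply continuous_finset_sum _ fun i _ => continuous_finset_sum _ fun k _ => ?_
    exact (((hAcont i k).abs.add (hBcont i k).abs).add (hCcont i k).abs)
  obtain ⟨R0, hR0⟩ := (isCompact_Icc (a := a) (b := b)).exists_bound_of_continuousOn
    hgcont.continuousOn
  set R : ℝ := max R0 0 with hRdef
  have hRnn : 0 ≤ R := le_max_right _ _
  have hgle : ∀ u i k, |A u i k| + |B u i k| + |C u i k| ≤ g u := by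
    intro u i k
    have h2 : |A u i k| + |B u i k| + |C u i k|
        ≤ ∑ k' : Fin 4, (|A u i k'| + |B u i k'| + |C u i k'|) :=
      Finset.single_le_sum (f := fun k' => |A u i k'| + |B u i k'| + |C u i k'|)
        (fun _ _ => by positivity) (Finset.mem_univ k)
    exact h2.trans (Finset.single_le_sum
      (f := fun i' => ∑ k' : Fin 4, (|A u i' k'| + |B u i' k'| + |C u i' k'|))
      (fun _ _ => by positivity) (Finset.mem_univ i))
  have hbound : ∀ u i k, |A (c u) i k| ≤ R ∧ |B (c u) i k| ≤ R ∧ |C (c u) i k| ≤ R := by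
    intro u i k
    have h3 : g (c u) ≤ R := by
      have := hR0 (c u) (hcIcc u)
      rw [Real.norm_eq_abs] at this
      exact (le_abs_self _).trans (this.trans (le_max_left _ _))
    have h4 := hgle (c u) i k
    have a1 := abs_nonneg (A (c u) i k)
    have a2 := abs_nonneg (B (c u) i k)
    have a3 := abs_nonneg (C (c u) i k)
    exact ⟨by linarith, by linarith, by linarith⟩
  -- vector field
  set vf : ℝ → (Fin 4 → ℂ) × (Fin 4 → ℂ) → (Fin 4 → ℂ) × (Fin 4 → ℂ) :=
    fun u z => ((matC (B (c u)))ᵀ *ᵥ z.1 + matC (C (c u)) *ᵥ z.2,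
                -(matC (A (c u))) *ᵥ z.1 - matC (B (c u)) *ᵥ z.2) with hvf
  have hnorm_entry : ∀ (X : Matrix (Fin 4) (Fin 4) ℝ) i k, ‖matC X i k‖ = |X i k| := by
    intro X i k; simp [matC]
  have hlin : ∀ u z, ‖vf u z‖ ≤ 8 * R * ‖z‖ := by
    intro u z
    rw [Prod.norm_def]
    have h1 : ‖z.1‖ ≤ ‖z‖ := norm_fst_le z
    have h2 : ‖z.2‖ ≤ ‖z‖ := norm_snd_le z
    apply max_le
    · rw [pi_norm_le_iff_of_nonneg (by positivity)]
      intro i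
      calc ‖((matC (B (c u)))ᵀ *ᵥ z.1 + matC (C (c u)) *ᵥ z.2) i‖
          ≤ ‖((matC (B (c u)))ᵀ *ᵥ z.1) i‖ + ‖(matC (C (c u)) *ᵥ z.2) i‖ := norm_add_le _ _
        _ ≤ 4 * R * ‖z.1‖ + 4 * R * ‖z.2‖ := by
            gcongr
            · exact mulVec_entry_norm_le _ _ R (fun i k => by
                rw [Matrix.transpose_apply, hnorm_entry]; exact (hbound u k i).2.1) i
            · exact mulVec_entry_norm_le _ _ R (fun i k => by
                rw [hnorm_entry]; exact (hbound u i k).2.2) i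
        _ ≤ 8 * R * ‖z‖ := by nlinarith [norm_nonneg z]
    · rw [pi_norm_le_iff_of_nonneg (by positivity)]
      intro i
      calc ‖((-(matC (A (c u)))) *ᵥ z.1 - matC (B (c u)) *ᵥ z.2) i‖
          ≤ ‖((-(matC (A (c u)))) *ᵥ z.1) i‖ + ‖(matC (B (c u)) *ᵥ z.2) i‖ := norm_sub_le _ _
        _ ≤ 4 * R * ‖z.1‖ + 4 * R * ‖z.2‖ := by
            gcongr
            · exact mulVec_entry_norm_le _ _ R (fun i k => by
                rw [Matrix.neg_apply, norm_neg, hnorm_entry]; exact (hbound u i k).1) i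
            · exact mulVec_entry_norm_le _ _ R (fun i k => by
                rw [hnorm_entry]; exact (hbound u i k).2.1) i
        _ ≤ 8 * R * ‖z‖ := by nlinarith [norm_nonneg z]
  set K : NNReal := (8 * R).toNNReal with hK
  have hlip : ∀ u, LipschitzWith K (vf u) := by
    intro u
    apply LipschitzWith.of_dist_le_mul
    intro z z'
    rw [dist_eq_norm, dist_eq_norm]
    have hsub : vf u z - vf u z' = vf u (z - z') := by
      have e1 : (z - z').1 = z.1 - z'.1 := rfl
      have e2 : (z - z').2 = z.2 - z'.2 := rfl
      apply Prod.ext <;>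
        simp only [hvf, Prod.fst_sub, Prod.snd_sub, e1, e2, Matrix.mulVec_sub] <;> abel
    rw [hsub, hK, Real.coe_toNNReal _ (by positivity)]
    exact hlin u (z - z')
  -- solutions
  set f : ℝ → (Fin 4 → ℂ) × (Fin 4 → ℂ) := fun u => (p u, q u) with hf
  set g2 : ℝ → (Fin 4 → ℂ) × (Fin 4 → ℂ) := fun u => (r u, t u) with hg2
  have hfc : Continuous f := by
    apply Continuous.prodMk <;> apply continuous_pi <;> intro i <;>
      rw [continuous_iff_continuousAt] <;> intro u
    · exact (hp u i).continuousAt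
    · exact (hq u i).continuousAt
  have hgc : Continuous g2 := by
    apply Continuous.prodMk <;> apply continuous_pi <;> intro i <;>
      rw [continuous_iff_continuousAt] <;> intro u
    · exact (hr u i).continuousAt
    · exact (ht u i).continuousAt
  have hf' : ∀ u ∈ Ioo a b, HasDerivAt f (vf u (f u)) u := by
    intro u hu
    have h1 : vf u (f u) = ((matC (B u))ᵀ *ᵥ p u + matC (C u) *ᵥ q u,
        -(matC (A u)) *ᵥ p u - matC (B u) *ᵥ q u) := by
      simp only [hvf, hceq u hu]; rfl
    rw [h1]
    exact (hasDerivAt_pi.mpr (hp u)).prodMk (hasDerivAt_pi.mpr (hq u))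
  have hg' : ∀ u ∈ Ioo a b, HasDerivAt g2 (vf u (g2 u)) u := by
    intro u hu
    have h1 : vf u (g2 u) = ((matC (B u))ᵀ *ᵥ r u + matC (C u) *ᵥ t u,
        -(matC (A u)) *ᵥ r u - matC (B u) *ᵥ t u) := by
      simp only [hvf, hceq u hu]; rfl
    rw [h1]
    exact (hasDerivAt_pi.mpr (hr u)).prodMk (hasDerivAt_pi.mpr (ht u))
  have heq := ODE_solution_unique_of_mem_Icc (v := vf) (s := fun _ => univ) (K := K)
    (fun u _ => (hlip u).lipschitzOnWith) h0mem hfc.continuousOn hf'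
    (fun _ _ => trivial) hgc.continuousOn hg' (fun _ _ => trivial)
    (Prod.ext h0 h0')
  have := heq hsmem
  exact congrArg Prod.fst this


lemma im_quadform (M : Matrix (Fin 4) (Fin 4) ℂ) (hM : Mᵀ = M) (w : Fin 4 → ℂ) :
    ((fun i => (starRingEnd ℂ) (w i)) ⬝ᵥ (M *ᵥ w)).im
      = (∑ μ : Fin 4, ∑ ν : Fin 4, (w μ).re * (M μ ν).im * (w ν).re)
        + ∑ μ : Fin 4, ∑ ν : Fin 4, (w μ).im * (M μ ν).im * (w ν).im := by
  have hsym : ∀ μ ν, (M ν μ) = M μ ν := fun μ ν => congrFun (congrFun hM μ) ν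
  have hswap : ∑ μ : Fin 4, ∑ ν : Fin 4, (M μ ν).re * ((w μ).re * (w ν).im)
      = ∑ μ : Fin 4, ∑ ν : Fin 4, (M μ ν).re * ((w ν).re * (w μ).im) := by
    rw [Finset.sum_comm]
    refine Finset.sum_congr rfl fun μ _ => Finset.sum_congr rfl fun ν _ => ?_
    rw [hsym]
  calc ((fun i => (starRingEnd ℂ) (w i)) ⬝ᵥ (M *ᵥ w)).im
      = ∑ μ : Fin 4, ∑ ν : Fin 4, ((starRingEnd ℂ) (w μ) * (M μ ν * w ν)).im := by
        simp [dotProduct, Matrix.mulVec, Complex.im_sum, Finset.mul_sum]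
    _ = ∑ μ : Fin 4, ∑ ν : Fin 4,
        (((w μ).re * (M μ ν).im * (w ν).re + (w μ).im * (M μ ν).im * (w ν).im)
          + ((M μ ν).re * ((w μ).re * (w ν).im) - (M μ ν).re * ((w ν).re * (w μ).im))) := by
        refine Finset.sum_congr rfl fun μ _ => Finset.sum_congr rfl fun ν _ => ?_
        simp [Complex.mul_im, Complex.mul_re, Complex.conj_re, Complex.conj_im]
        ring
    _ = _ := by
        simp only [Finset.sum_add_distrib, Finset.sum_sub_distrib]
        rw [hswap]
        ring_nf


section
variable (A B C : ℝ → Matrix (Fin 4) (Fin 4) ℝ) (J V : ℝ → Matrix (Fin 4) (Fin 4) ℂ)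

-- (a) columns of a matrix solution are vector solutions
lemma col_sol_J
    (hJ : ∀ (s : ℝ) (i j : Fin 4), HasDerivAt (fun t => J t i j)
      (((matC (B s))ᵀ * J s + matC (C s) * V s) i j) s)
    (w : Fin 4 → ℂ) (s : ℝ) (i : Fin 4) :
    HasDerivAt (fun u => (J u *ᵥ w) i)
      (((matC (B s))ᵀ *ᵥ (J s *ᵥ w) + matC (C s) *ᵥ (V s *ᵥ w)) i) s := by
  have h := HasDerivAt.sum (u := Finset.univ)
    (A' := fun k => ((matC (B s))ᵀ * J s + matC (C s) * V s) i k * w k)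
    (fun k _ => (hJ s i k).mul_const (w k))
  have e : (((matC (B s))ᵀ *ᵥ (J s *ᵥ w) + matC (C s) *ᵥ (V s *ᵥ w)) i)
      = ∑ k : Fin 4, ((matC (B s))ᵀ * J s + matC (C s) * V s) i k * w k := by
    rw [mulVec_mulVec, mulVec_mulVec, ← add_mulVec]
    rfl
  rw [e]
  exact h
lemma col_sol_V
    (hV : ∀ (s : ℝ) (i j : Fin 4), HasDerivAt (fun t => V t i j)
      ((-(matC (A s)) * J s - matC (B s) * V s) i j) s)
    (w : Fin 4 → ℂ) (s : ℝ) (i : Fin 4) :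
    HasDerivAt (fun u => (V u *ᵥ w) i)
      ((-(matC (A s)) *ᵥ (J s *ᵥ w) - matC (B s) *ᵥ (V s *ᵥ w)) i) s := by
  have h := HasDerivAt.sum (u := Finset.univ)
    (A' := fun k => (-(matC (A s)) * J s - matC (B s) * V s) i k * w k)
    (fun k _ => (hV s i k).mul_const (w k))
  have e : ((-(matC (A s)) *ᵥ (J s *ᵥ w) - matC (B s) *ᵥ (V s *ᵥ w)) i)
      = ∑ k : Fin 4, (-(matC (A s)) * J s - matC (B s) * V s) i k * w k := by
    rw [mulVec_mulVec, mulVec_mulVec, ← sub_mulVec]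
    rfl
  rw [e]
  exact h

-- (b) conjugates of vector solutions are vector solutions
lemma conj_sol_p (p q : ℝ → Fin 4 → ℂ)
    (hp : ∀ (s : ℝ) (i : Fin 4), HasDerivAt (fun u => p u i)
      (((matC (B s))ᵀ *ᵥ p s + matC (C s) *ᵥ q s) i) s) (s : ℝ) (i : Fin 4) :
    HasDerivAt (fun u => (starRingEnd ℂ) (p u i))
      (((matC (B s))ᵀ *ᵥ (fun k => (starRingEnd ℂ) (p s k))
        + matC (C s) *ᵥ (fun k => (starRingEnd ℂ) (q s k))) i) s := by
  have h := (hp s i).star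
  have e : star (((matC (B s))ᵀ *ᵥ p s + matC (C s) *ᵥ q s) i)
      = (((matC (B s))ᵀ *ᵥ (fun k => (starRingEnd ℂ) (p s k))
        + matC (C s) *ᵥ (fun k => (starRingEnd ℂ) (q s k))) i) := by
    simp [Matrix.mulVec, dotProduct, matC, Complex.conj_ofReal, map_sum,
      Pi.add_apply, Complex.star_def]
  rw [← e]
  exact h
lemma conj_sol_q (p q : ℝ → Fin 4 → ℂ)
    (hq : ∀ (s : ℝ) (i : Fin 4), HasDerivAt (fun u => q u i)
      ((-(matC (A s)) *ᵥ p s - matC (B s) *ᵥ q s) i) s) (s : ℝ) (i : Fin 4) :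
    HasDerivAt (fun u => (starRingEnd ℂ) (q u i))
      ((-(matC (A s)) *ᵥ (fun k => (starRingEnd ℂ) (p s k))
        - matC (B s) *ᵥ (fun k => (starRingEnd ℂ) (q s k))) i) s := by
  have h := (hq s i).star
  have e : star ((-(matC (A s)) *ᵥ p s - matC (B s) *ᵥ q s) i)
      = ((-(matC (A s)) *ᵥ (fun k => (starRingEnd ℂ) (p s k))
        - matC (B s) *ᵥ (fun k => (starRingEnd ℂ) (q s k))) i) := by
    simp [Matrix.mulVec, dotProduct, matC, Complex.conj_ofReal, map_sum,
      Pi.sub_apply, Matrix.neg_apply, Complex.star_def, Finset.sum_sub_distrib]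
  rw [← e]
  exact h

-- (c) complexification of a real vector solution
lemma real_sol_j (j v : ℝ → Fin 4 → ℝ)
    (hj : ∀ (s : ℝ) (i : Fin 4), HasDerivAt (fun t => j t i)
      (((B s)ᵀ *ᵥ j s + C s *ᵥ v s) i) s) (s : ℝ) (i : Fin 4) :
    HasDerivAt (fun u => ((j u i : ℝ) : ℂ))
      (((matC (B s))ᵀ *ᵥ (fun k => ((j s k : ℝ) : ℂ))
        + matC (C s) *ᵥ (fun k => ((v s k : ℝ) : ℂ))) i) s := by
  have h := (hj s i).ofReal_comp
  have e : ((((B s)ᵀ *ᵥ j s + C s *ᵥ v s) i : ℝ) : ℂ)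
      = (((matC (B s))ᵀ *ᵥ (fun k => ((j s k : ℝ) : ℂ))
        + matC (C s) *ᵥ (fun k => ((v s k : ℝ) : ℂ))) i) := by
    simp [Matrix.mulVec, dotProduct, matC]
  rw [← e]
  exact h
lemma real_sol_v (j v : ℝ → Fin 4 → ℝ)
    (hv : ∀ (s : ℝ) (i : Fin 4), HasDerivAt (fun t => v t i)
      ((-(A s) *ᵥ j s - B s *ᵥ v s) i) s) (s : ℝ) (i : Fin 4) :
    HasDerivAt (fun u => ((v u i : ℝ) : ℂ))
      ((-(matC (A s)) *ᵥ (fun k => ((j s k : ℝ) : ℂ))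
        - matC (B s) *ᵥ (fun k => ((v s k : ℝ) : ℂ))) i) s := by
  have h := (hv s i).ofReal_comp
  have e : (((-(A s) *ᵥ j s - B s *ᵥ v s) i : ℝ) : ℂ)
      = ((-(matC (A s)) *ᵥ (fun k => ((j s k : ℝ) : ℂ))
        - matC (B s) *ᵥ (fun k => ((v s k : ℝ) : ℂ))) i) := by
    simp [Matrix.mulVec, dotProduct, matC, Matrix.neg_apply]
  rw [← e]
  exact h
end


/-- The key lemma of the Gaussian beam construction (Section 2.2 of the paper):
under the stated positivity and compatibility conditions on the data `M₀` and the
distinguished real solution `(j, v)` (with `j(s) ≠ 0`), the matrix `J(s)` of the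
solution of the linearised system with `J(0) = Id`, `V(0) = M₀` is invertible for
every `s ∈ ℝ` (no breakdown at caustics). -/
theorem gaussian_beam_J_invertible
    (A B C : ℝ → Matrix (Fin 4) (Fin 4) ℝ)
    (hAcont : ∀ i j : Fin 4, Continuous fun s => A s i j)
    (hBcont : ∀ i j : Fin 4, Continuous fun s => B s i j)
    (hCcont : ∀ i j : Fin 4, Continuous fun s => C s i j)
    (hAsymm : ∀ s : ℝ, (A s)ᵀ = A s)
    (hCsymm : ∀ s : ℝ, (C s)ᵀ = C s)
    (J V : ℝ → Matrix (Fin 4) (Fin 4) ℂ)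
    (hJ : ∀ (s : ℝ) (i j : Fin 4), HasDerivAt (fun t => J t i j)
      (((matC (B s))ᵀ * J s + matC (C s) * V s) i j) s)
    (hV : ∀ (s : ℝ) (i j : Fin 4), HasDerivAt (fun t => V t i j)
      ((-(matC (A s)) * J s - matC (B s) * V s) i j) s)
    (M₀ : Matrix (Fin 4) (Fin 4) ℂ) (hM₀ : M₀ᵀ = M₀)
    (hJ0 : J 0 = 1) (hV0 : V 0 = M₀)
    (j v : ℝ → Fin 4 → ℝ)
    (hj : ∀ (s : ℝ) (i : Fin 4), HasDerivAt (fun t => j t i)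
      (((B s)ᵀ *ᵥ j s + C s *ᵥ v s) i) s)
    (hv : ∀ (s : ℝ) (i : Fin 4), HasDerivAt (fun t => v t i)
      ((-(A s) *ᵥ j s - B s *ᵥ v s) i) s)
    (hjne : ∀ s : ℝ, j s ≠ 0)
    (hv0 : (fun i => ((v 0 i : ℝ) : ℂ)) = M₀ *ᵥ (fun i => ((j 0 i : ℝ) : ℂ)))
    (W : Submodule ℝ (Fin 4 → ℝ))
    (hWdim : Module.finrank ℝ W = 3)
    (hWcompl : IsCompl W (Submodule.span ℝ {j 0}))
    (hWpos : ∀ x ∈ W, x ≠ 0 →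
      0 < ∑ μ : Fin 4, ∑ ν : Fin 4, x μ * (M₀ μ ν).im * x ν) :
    ∀ s : ℝ, IsUnit (J s) := by
  intro s₀
  by_contra hJs
  have hdet : (J s₀).det = 0 := by
    by_contra hd
    exact hJs ((Matrix.isUnit_iff_isUnit_det _).mpr (isUnit_iff_ne_zero.mpr hd))
  obtain ⟨w, hw0, hww⟩ := (Matrix.exists_mulVec_eq_zero_iff).mpr hdet
  -- the vector solutions (J *ᵥ w, V *ᵥ w) and its conjugate
  set p : ℝ → Fin 4 → ℂ := fun u => J u *ᵥ w with hpdef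
  set q : ℝ → Fin 4 → ℂ := fun u => V u *ᵥ w with hqdef
  set pb : ℝ → Fin 4 → ℂ := fun u i => (starRingEnd ℂ) (p u i) with hpbdef
  set qb : ℝ → Fin 4 → ℂ := fun u i => (starRingEnd ℂ) (q u i) with hqbdef
  have hp : ∀ (s : ℝ) (i : Fin 4), HasDerivAt (fun u => p u i)
      (((matC (B s))ᵀ *ᵥ p s + matC (C s) *ᵥ q s) i) s :=
    fun s i => col_sol_J B C J V hJ w s i
  have hq : ∀ (s : ℝ) (i : Fin 4), HasDerivAt (fun u => q u i)
      ((-(matC (A s)) *ᵥ p s - matC (B s) *ᵥ q s) i) s :=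
    fun s i => col_sol_V A B J V hV w s i
  have hpb : ∀ (s : ℝ) (i : Fin 4), HasDerivAt (fun u => pb u i)
      (((matC (B s))ᵀ *ᵥ pb s + matC (C s) *ᵥ qb s) i) s :=
    fun s i => conj_sol_p B C p q hp s i
  have hqb : ∀ (s : ℝ) (i : Fin 4), HasDerivAt (fun u => qb u i)
      ((-(matC (A s)) *ᵥ pb s - matC (B s) *ᵥ qb s) i) s :=
    fun s i => conj_sol_q A B p q hq s i
  -- invariant:  pb ⬝ᵥ q - qb ⬝ᵥ p  is constant
  have hinv := wronskian_const A B C hAsymm hCsymm pb qb p q hpb hqb hp hq s₀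
  have hps₀ : p s₀ = 0 := hww
  have hpbs₀ : pb s₀ = 0 := by funext i; simp [hpbdef, hps₀]
  rw [hps₀, hpbs₀, zero_dotProduct, dotProduct_zero, sub_zero] at hinv
  have hp0 : p 0 = w := by rw [hpdef]; simp [hJ0]
  have hq0 : q 0 = M₀ *ᵥ w := by rw [hqdef]; simp [hV0]
  -- the hermitian form value is real
  have hpb0 : pb 0 = fun i => (starRingEnd ℂ) (w i) := by
    funext i
    show (starRingEnd ℂ) (p 0 i) = _
    rw [hp0]
  have hqb0 : qb 0 = fun i => (starRingEnd ℂ) ((M₀ *ᵥ w) i) := by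
    funext i
    show (starRingEnd ℂ) (q 0 i) = _
    rw [hq0]
  have hform : pb 0 ⬝ᵥ q 0 = (fun i => (starRingEnd ℂ) (w i)) ⬝ᵥ (M₀ *ᵥ w) := by
    rw [hpb0, hq0]
  have hformb : qb 0 ⬝ᵥ p 0
      = (starRingEnd ℂ) ((fun i => (starRingEnd ℂ) (w i)) ⬝ᵥ (M₀ *ᵥ w)) := by
    rw [hqb0, hp0]
    simp only [dotProduct, map_sum]
    refine Finset.sum_congr rfl fun i _ => ?_
    rw [_root_.map_mul, Complex.conj_conj]
    ring
  have him : ((fun i => (starRingEnd ℂ) (w i)) ⬝ᵥ (M₀ *ᵥ w)).im = 0 := by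
    rw [← Complex.conj_eq_iff_im]
    rw [hform, hformb] at hinv
    exact (sub_eq_zero.mp hinv.symm).symm
  have hquad := im_quadform M₀ hM₀ w
  rw [him] at hquad
  -- positivity of the imaginary part quadratic form
  set j0 : Fin 4 → ℝ := j 0 with hj0def
  have hSj0 : ∀ i : Fin 4, ∑ k : Fin 4, (M₀ i k).im * j0 k = 0 := by
    intro i
    have h2 := congrArg Complex.im (congrFun hv0 i)
    simp only [Matrix.mulVec, dotProduct, Complex.im_sum, Complex.mul_im,
      Complex.ofReal_im, Complex.ofReal_re, mul_zero, zero_add] at h2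
    rw [← h2]
  have hsym : ∀ μ ν, (M₀ ν μ).im = (M₀ μ ν).im :=
    fun μ ν => congrArg Complex.im (congrFun (congrFun hM₀ μ) ν)
  have hcross1 : ∀ y' : Fin 4 → ℝ,
      ∑ μ : Fin 4, ∑ ν : Fin 4, y' μ * (M₀ μ ν).im * j0 ν = 0 := by
    intro y'
    apply Finset.sum_eq_zero; intro μ _
    calc ∑ ν : Fin 4, y' μ * (M₀ μ ν).im * j0 ν
        = y' μ * ∑ ν : Fin 4, (M₀ μ ν).im * j0 ν := by
          rw [Finset.mul_sum]; exact Finset.sum_congr rfl fun ν _ => by ring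
      _ = 0 := by rw [hSj0 μ, mul_zero]
  have hcross2 : ∀ y' : Fin 4 → ℝ,
      ∑ μ : Fin 4, ∑ ν : Fin 4, j0 μ * (M₀ μ ν).im * y' ν = 0 := by
    intro y'
    rw [Finset.sum_comm]
    apply Finset.sum_eq_zero; intro ν _
    calc ∑ μ : Fin 4, j0 μ * (M₀ μ ν).im * y' ν
        = y' ν * ∑ μ : Fin 4, (M₀ ν μ).im * j0 μ := by
          rw [Finset.mul_sum]; exact Finset.sum_congr rfl fun μ _ => by
            rw [hsym μ ν]; ring
      _ = 0 := by rw [hSj0 ν, mul_zero]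
  have hQ : ∀ z : Fin 4 → ℝ,
      0 ≤ (∑ μ : Fin 4, ∑ ν : Fin 4, z μ * (M₀ μ ν).im * z ν) ∧
      ((∑ μ : Fin 4, ∑ ν : Fin 4, z μ * (M₀ μ ν).im * z ν) = 0 →
        ∃ c : ℝ, z = c • j0) := by
    intro z
    have hz : z ∈ W ⊔ Submodule.span ℝ {j0} := by
      rw [hWcompl.sup_eq_top]; trivial
    obtain ⟨y, hyW, u, huS, hyu⟩ := Submodule.mem_sup.mp hz
    obtain ⟨c, rfl⟩ := Submodule.mem_span_singleton.mp huS
    have hzeq : z = fun i => y i + c * j0 i := by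
      rw [← hyu]; rfl
    have hQz : (∑ μ : Fin 4, ∑ ν : Fin 4, z μ * (M₀ μ ν).im * z ν)
        = ∑ μ : Fin 4, ∑ ν : Fin 4, y μ * (M₀ μ ν).im * y ν := by
      rw [hzeq]
      have hterm : ∀ μ ν : Fin 4, (y μ + c * j0 μ) * (M₀ μ ν).im * (y ν + c * j0 ν)
          = y μ * (M₀ μ ν).im * y ν + c * (y μ * (M₀ μ ν).im * j0 ν)
            + (c * (j0 μ * (M₀ μ ν).im * y ν)
              + (c * c) * (j0 μ * (M₀ μ ν).im * j0 ν)) := fun μ ν => by ring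
      simp only [hterm, Finset.sum_add_distrib, ← Finset.mul_sum]
      rw [hcross1 y, hcross2 y, hcross1 j0]
      ring
    by_cases hy : y = 0
    · refine ⟨by rw [hQz, hy]; simp, fun _ => ⟨c, ?_⟩⟩
      rw [hzeq, hy]; funext i; simp
    · have hpos := hWpos y hyW hy
      exact ⟨by rw [hQz]; linarith, fun h0 => by rw [hQz] at h0; linarith⟩
  -- deduce that w is a multiple of j0
  have hxq := hQ fun i => (w i).re
  have hyq := hQ fun i => (w i).im
  obtain ⟨cx, hcx⟩ := hxq.2 (by linarith [hxq.1, hyq.1])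
  obtain ⟨cy, hcy⟩ := hyq.2 (by linarith [hxq.1, hyq.1])
  set cc : ℂ := ⟨cx, cy⟩ with hccdef
  have hwcc : ∀ i, w i = cc * ((j0 i : ℝ) : ℂ) := by
    intro i
    have h1 : (w i).re = cx * j0 i := congrFun hcx i
    have h2 : (w i).im = cy * j0 i := congrFun hcy i
    apply Complex.ext
    · rw [h1]; simp [hccdef, Complex.mul_re]
    · rw [h2]; simp [hccdef, Complex.mul_im]
  have hcc0 : cc ≠ 0 := by
    intro h
    apply hw0
    funext i
    rw [Pi.zero_apply, hwcc i, h, zero_mul]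
  -- hence J s₀ kills the complexified j0
  have hJjc : (J s₀) *ᵥ (fun i => ((j0 i : ℝ) : ℂ)) = 0 := by
    funext i
    have h1 : (J s₀ *ᵥ w) i = cc * ((J s₀ *ᵥ fun k => ((j0 k : ℝ) : ℂ)) i) := by
      simp only [Matrix.mulVec, dotProduct, Finset.mul_sum]
      exact Finset.sum_congr rfl fun k _ => by rw [hwcc k]; ring
    rw [hww] at h1
    have h2 := h1.symm
    rw [Pi.zero_apply] at h2
    rcases mul_eq_zero.mp h2 with h3 | h3
    · exact absurd h3 hcc0
    · rw [Pi.zero_apply]; exact h3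
  -- but by uniqueness, J s *ᵥ j0 = j s, which is nonzero
  have huniq := ode_unique A B C hAcont hBcont hCcont
    (fun u => J u *ᵥ (fun i => ((j0 i : ℝ) : ℂ)))
    (fun u => V u *ᵥ (fun i => ((j0 i : ℝ) : ℂ)))
    (fun u i => ((j u i : ℝ) : ℂ)) (fun u i => ((v u i : ℝ) : ℂ))
    (col_sol_J B C J V hJ _) (col_sol_V A B J V hV _)
    (real_sol_j B C j v hj) (real_sol_v A B j v hv)
    (by
      funext i
      show (J 0 *ᵥ fun k => ((j0 k : ℝ) : ℂ)) i = ((j 0 i : ℝ) : ℂ)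
      rw [hJ0, Matrix.one_mulVec])
    (by
      funext i
      show (V 0 *ᵥ fun k => ((j0 k : ℝ) : ℂ)) i = ((v 0 i : ℝ) : ℂ)
      rw [hV0]
      exact congrFun hv0.symm i) s₀
  rw [hJjc] at huniq
  apply hjne s₀
  funext i
  have := congrFun huniq i
  rw [Pi.zero_apply] at this
  exact_mod_cast this.symm
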